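/- Let P be a finite type, V a finite type, f, g : P → V two maps, and ρ, L ≥ 1 natural numbers such that every fiber of f and every fiber of g has at most ρ·L elements. Then there exists a coloring c : P → Fin L such that for every v ∈ V and every k ∈ Fin L, the number of p ∈ P with f p = v and c p = k is at most ρ, and the number of p ∈ P with g p = v and c p = k is at most ρ. -/

import Mathlib

open Finset

theorem regular_coloring : ∀ (D : ℕ) (P : Type) [Fintype P] [DecidableEq P]
    (V : Type) [Fintype V] [DecidableEq V] (f g : P → V),
    (∀ v, (univ.filter fun p : P => f p = v).card = D) →
    (∀ v, (univ.filter fun p : P => g p = v).card = D) →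
    ∃ c : P → Fin D, ∀ (v : V) (k : Fin D),
      (univ.filter fun p : P => f p = v ∧ c p = k).card ≤ 1 ∧
      (univ.filter fun p : P => g p = v ∧ c p = k).card ≤ 1 := by
  intro D
  induction D with
  | zero =>
    intro P _ _ V _ _ f g hf _
    have hP : IsEmpty P := by
      constructor
      intro p
      have h := hf (f p)
      rw [Finset.card_eq_zero] at h
      have : p ∈ (univ.filter fun q : P => f q = f p) := by simp
      rw [h] at this
      exact absurd this (Finset.notMem_empty p)
    refine ⟨fun p => (hP.false p).elim, fun v k => k.elim0⟩
  | succ D ih =>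
    intro P _ _ V _ _ f g hf hg
    set t : V → Finset V := fun v => (univ.filter fun p : P => f p = v).image g with ht
    have hall : ∀ s : Finset V, s.card ≤ (s.biUnion t).card := by
      intro s
      have hsub : (univ.filter fun p : P => f p ∈ s) ⊆
          (univ.filter fun p : P => g p ∈ s.biUnion t) := by
        intro p hp
        simp only [mem_filter, mem_univ, true_and] at hp ⊢
        refine Finset.mem_biUnion.mpr ⟨f p, hp, ?_⟩
        exact Finset.mem_image.mpr ⟨p, by simp, rfl⟩
      have hcount : ∀ (φ : P → V) (hφ : ∀ v, (univ.filter fun p : P => φ p = v).card = D+1)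
          (w : Finset V), (univ.filter fun p : P => φ p ∈ w).card = (D+1) * w.card := by
        intro φ hφ w
        rw [Finset.card_eq_sum_card_fiberwise (f := φ) (s := univ.filter fun p : P => φ p ∈ w) (t := w)
          (fun p hp => (mem_filter.mp hp).2)]
        have : ∀ v ∈ w, ((univ.filter fun p : P => φ p ∈ w).filter
            fun p => φ p = v) = univ.filter fun p : P => φ p = v := by
          intro v hv
          ext p
          simp only [mem_filter, mem_univ, true_and]
          constructor
          · rintro ⟨_, h2⟩; exact h2
          · intro h2; exact ⟨h2 ▸ hv, h2⟩
        rw [Finset.sum_congr rfl fun v hv => by rw [this v hv, hφ v]]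
        rw [Finset.sum_const, smul_eq_mul, mul_comm]
      have h1 : (univ.filter fun p : P => f p ∈ s).card = (D+1) * s.card := hcount f hf s
      have h2 : (univ.filter fun p : P => g p ∈ s.biUnion t).card
          = (D+1) * (s.biUnion t).card := hcount g hg _
      have := Finset.card_le_card hsub
      rw [h1, h2] at this
      exact Nat.le_of_mul_le_mul_left this (Nat.succ_pos D)
    obtain ⟨h, hinj, hmem⟩ := (Finset.all_card_le_biUnion_card_iff_exists_injective t).mp hall
    have hσex : ∀ v, ∃ p : P, f p = v ∧ g p = h v := by
      intro v
      have := hmem v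
      simp only [ht, Finset.mem_image, mem_filter, mem_univ, true_and] at this
      obtain ⟨p, hp1, hp2⟩ := this
      exact ⟨p, hp1, hp2⟩
    choose σ hσf hσg using hσex
    have hσinj : Function.Injective σ := fun a b hab => by
      have := congrArg f hab; rwa [hσf, hσf] at this
    have hbij : Function.Bijective h := Finite.injective_iff_bijective.mp hinj
    set e : V ≃ V := Equiv.ofBijective h hbij with he
    set S : Finset P := univ.image σ with hS
    -- uniqueness facts
    have memS_f : ∀ {p v}, p ∈ S → f p = v → p = σ v := by
      intro p v hp hfp
      simp only [hS, Finset.mem_image, mem_univ, true_and] at hp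
      obtain ⟨u, rfl⟩ := hp
      rw [hσf] at hfp; rw [hfp]
    have memS_g : ∀ {p v}, p ∈ S → g p = v → p = σ (e.symm v) := by
      intro p v hp hgp
      simp only [hS, Finset.mem_image, mem_univ, true_and] at hp
      obtain ⟨u, rfl⟩ := hp
      rw [hσg] at hgp
      have : e u = v := hgp
      rw [← this, Equiv.symm_apply_apply]
    -- fiber counts off S
    have count_f : ∀ v, (univ.filter fun p : P => f p = v ∧ p ∉ S).card = D := by
      intro v
      have hset : (univ.filter fun p : P => f p = v ∧ p ∉ S)
          = (univ.filter fun p : P => f p = v) \ {σ v} := by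
        ext p
        simp only [mem_filter, mem_univ, true_and, Finset.mem_sdiff, Finset.mem_singleton]
        constructor
        · rintro ⟨h1, h2⟩
          exact ⟨h1, fun hps => h2 (hps ▸ Finset.mem_image_of_mem σ (mem_univ v))⟩
        · rintro ⟨h1, h2⟩
          exact ⟨h1, fun hpS => h2 (memS_f hpS h1)⟩
      rw [hset, Finset.card_sdiff_of_subset (by simp [hσf v]), hf, Finset.card_singleton]
      omega
    have count_g : ∀ v, (univ.filter fun p : P => g p = v ∧ p ∉ S).card = D := by
      intro v
      have hset : (univ.filter fun p : P => g p = v ∧ p ∉ S)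
          = (univ.filter fun p : P => g p = v) \ {σ (e.symm v)} := by
        ext p
        simp only [mem_filter, mem_univ, true_and, Finset.mem_sdiff, Finset.mem_singleton]
        constructor
        · rintro ⟨h1, h2⟩
          exact ⟨h1, fun hps => h2 (hps ▸ Finset.mem_image_of_mem σ (mem_univ _))⟩
        · rintro ⟨h1, h2⟩
          exact ⟨h1, fun hpS => h2 (memS_g hpS h1)⟩
      have hmemfib : σ (e.symm v) ∈ (univ.filter fun p : P => g p = v) := by
        simp only [mem_filter, mem_univ, true_and, hσg]
        exact e.apply_symm_apply v
      rw [hset, Finset.card_sdiff_of_subset (by simpa using hmemfib), hg, Finset.card_singleton]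
      omega
    -- subtype
    set P₂ := {p : P // p ∉ S} with hP₂
    have card_transfer : ∀ (φ : P → V) (v : V),
        (univ.filter fun q : P₂ => φ q.1 = v).card
          = (univ.filter fun p : P => φ p = v ∧ p ∉ S).card := by
      intro φ v
      apply Finset.card_bij (fun (q : P₂) _ => q.1)
      · intro q hq
        simp only [mem_filter, mem_univ, true_and] at hq ⊢
        exact ⟨hq, q.2⟩
      · intro a _ b _ hab
        exact Subtype.ext hab
      · intro p hp
        simp only [mem_filter, mem_univ, true_and] at hp
        exact ⟨⟨p, hp.2⟩, by simp [hp.1], rfl⟩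
    obtain ⟨c₂, hc₂⟩ := ih P₂ V (fun q => f q.1) (fun q => g q.1)
      (fun v => by rw [card_transfer f v]; exact count_f v)
      (fun v => by rw [card_transfer g v]; exact count_g v)
    refine ⟨fun p => if hp : p ∈ S then Fin.last D else (c₂ ⟨p, hp⟩).castSucc, ?_⟩
    intro v k
    set c : P → Fin (D+1) :=
      fun p => if hp : p ∈ S then Fin.last D else (c₂ ⟨p, hp⟩).castSucc with hc
    induction k using Fin.lastCases with
    | last =>
      have hlast : ∀ p : P, c p = Fin.last D → p ∈ S := by
        intro p hp
        by_contra hpS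
        rw [hc] at hp
        simp only [dif_neg hpS] at hp
        exact absurd hp (Fin.castSucc_lt_last _).ne
      constructor
      · apply Finset.card_le_one.mpr
        intro a ha b hb
        simp only [mem_filter, mem_univ, true_and] at ha hb
        rw [memS_f (hlast a ha.2) ha.1, memS_f (hlast b hb.2) hb.1]
      · apply Finset.card_le_one.mpr
        intro a ha b hb
        simp only [mem_filter, mem_univ, true_and] at ha hb
        rw [memS_g (hlast a ha.2) ha.1, memS_g (hlast b hb.2) hb.1]
    | cast j =>
      have hcast : ∀ p : P, c p = j.castSucc → ∃ hp : p ∉ S, c₂ ⟨p, hp⟩ = j := by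
        intro p hp
        rw [hc] at hp
        by_cases hpS : p ∈ S
        · simp only [dif_pos hpS] at hp
          exact absurd hp.symm (Fin.castSucc_lt_last _).ne
        · simp only [dif_neg hpS] at hp
          exact ⟨hpS, Fin.castSucc_injective _ hp⟩
      constructor
      · apply Finset.card_le_one.mpr
        intro a ha b hb
        simp only [mem_filter, mem_univ, true_and] at ha hb
        obtain ⟨haS, haj⟩ := hcast a ha.2
        obtain ⟨hbS, hbj⟩ := hcast b hb.2
        have h1 := (hc₂ v j).1
        have := Finset.card_le_one.mp h1 ⟨a, haS⟩ (by simp [ha.1, haj]) ⟨b, hbS⟩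
          (by simp [hb.1, hbj])
        exact congrArg Subtype.val this
      · apply Finset.card_le_one.mpr
        intro a ha b hb
        simp only [mem_filter, mem_univ, true_and] at ha hb
        obtain ⟨haS, haj⟩ := hcast a ha.2
        obtain ⟨hbS, hbj⟩ := hcast b hb.2
        have h1 := (hc₂ v j).2
        have := Finset.card_le_one.mp h1 ⟨a, haS⟩ (by simp [ha.1, haj]) ⟨b, hbS⟩
          (by simp [hb.1, hbj])
        exact congrArg Subtype.val this

theorem sum_filter_card {α β : Type} [Fintype α] [Fintype β] (Q : α ⊕ β → Prop)
    [DecidablePred Q] :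
    (univ.filter Q).card
      = (univ.filter fun a : α => Q (Sum.inl a)).card
        + (univ.filter fun b : β => Q (Sum.inr b)).card := by
  rw [← Finset.card_disjSum]
  congr 1
  ext x
  cases x with
  | inl a => simp [Finset.mem_disjSum]
  | inr b => simp [Finset.mem_disjSum]

theorem sigma_fiber_card {V : Type} [Fintype V] [DecidableEq V] (m : V → ℕ) (v : V) :
    (univ.filter fun a : Σ u : V, Fin (m u) => a.1 = v).card = m v := by
  have : (univ.filter fun a : Σ u : V, Fin (m u) => a.1 = v)
      = Finset.sigma {v} (fun u => (univ : Finset (Fin (m u)))) := by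
    ext a
    simp [Finset.mem_sigma]
  rw [this, Finset.card_sigma]
  simp





/-- **Core combinatorial step of the color-route theorem.**
Packets `P` have sources `f p` and destinations `g p` in `V`; if every fiber of
`f` and of `g` has at most `ρ·L` elements, then the packets can be colored with
`L` colors so that at most `ρ` packets of any given color share a source, and
at most `ρ` packets of any given color share a destination. -/
theorem stmt7 (P V : Type) [Fintype P] [Fintype V] [DecidableEq V]
    (f g : P → V) (ρ L : ℕ) (hρ : 1 ≤ ρ) (hL : 1 ≤ L)
    (hf : ∀ v : V, (Finset.univ.filter fun p : P => f p = v).card ≤ ρ * L)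
    (hg : ∀ v : V, (Finset.univ.filter fun p : P => g p = v).card ≤ ρ * L) :
    ∃ c : P → Fin L, ∀ v : V, ∀ k : Fin L,
      (Finset.univ.filter fun p : P => f p = v ∧ c p = k).card ≤ ρ ∧
      (Finset.univ.filter fun p : P => g p = v ∧ c p = k).card ≤ ρ := by
  classical
  set D := ρ * L with hD
  set n : V → ℕ := fun v => (univ.filter fun p : P => f p = v).card with hn
  set m : V → ℕ := fun v => (univ.filter fun p : P => g p = v).card with hm
  -- counts
  have hsumn : ∑ v : V, n v = Fintype.card P := by
    rw [hn, ← Finset.card_univ]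
    exact (Finset.card_eq_sum_card_fiberwise (f := f) (t := univ)
      (fun p _ => mem_univ _)).symm
  have hsumm : ∑ v : V, m v = Fintype.card P := by
    rw [hm, ← Finset.card_univ]
    exact (Finset.card_eq_sum_card_fiberwise (f := g) (t := univ)
      (fun p _ => mem_univ _)).symm
  have e1 : ∑ v : V, (D - n v) + ∑ v : V, n v = Fintype.card V * D := by
    rw [← Finset.sum_add_distrib, Finset.sum_congr rfl
      (fun v _ => Nat.sub_add_cancel (hf v))]
    simp [Finset.card_univ]
  have e2 : ∑ v : V, (D - m v) + ∑ v : V, m v = Fintype.card V * D := by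
    rw [← Finset.sum_add_distrib, Finset.sum_congr rfl
      (fun v _ => Nat.sub_add_cancel (hg v))]
    simp [Finset.card_univ]
  have hcardAB : Fintype.card (Σ u : V, Fin (D - n u))
      = Fintype.card (Σ u : V, Fin (D - m u)) := by
    rw [Fintype.card_sigma, Fintype.card_sigma]
    simp only [Fintype.card_fin]
    omega
  let e : (Σ u : V, Fin (D - n u)) ≃ (Σ u : V, Fin (D - m u)) := Fintype.equivOfCardEq hcardAB
  set f' : P ⊕ (Σ u : V, Fin (D - n u)) → V := Sum.elim f (fun a => a.1) with hf'
  set g' : P ⊕ (Σ u : V, Fin (D - n u)) → V := Sum.elim g (fun a => (e a).1) with hg'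
  have hfib_eA : ∀ v : V, (univ.filter fun a : Σ u : V, Fin (D - n u) => (e a).1 = v).card
      = (univ.filter fun b : Σ u : V, Fin (D - m u) => b.1 = v).card := by
    intro v
    apply Finset.card_bij (fun a _ => e a)
    · intro a ha; simpa using (mem_filter.mp ha).2
    · intro a _ b _ hab; exact e.injective hab
    · intro b hb
      exact ⟨e.symm b, by simpa using (mem_filter.mp hb).2, e.apply_symm_apply b⟩
  have hreg_f : ∀ v : V, (univ.filter fun x : P ⊕ (Σ u : V, Fin (D - n u)) => f' x = v).card = D := by
    intro v
    rw [sum_filter_card]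
    simp only [hf', Sum.elim_inl, Sum.elim_inr]
    rw [sigma_fiber_card (fun u => D - n u) v]
    have h1 : (univ.filter fun p : P => f p = v).card = n v := rfl
    have h2 := hf v
    omega
  have hreg_g : ∀ v : V, (univ.filter fun x : P ⊕ (Σ u : V, Fin (D - n u)) => g' x = v).card = D := by
    intro v
    rw [sum_filter_card]
    simp only [hg', Sum.elim_inl, Sum.elim_inr]
    rw [hfib_eA v, sigma_fiber_card (fun u => D - m u) v]
    have h1 : (univ.filter fun p : P => g p = v).card = m v := rfl
    have h2 := hg v
    omega
  obtain ⟨c', hc'⟩ := regular_coloring D (P ⊕ (Σ u : V, Fin (D - n u))) V f' g' hreg_f hreg_g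
  have hρpos : 0 < ρ := hρ
  refine ⟨fun p => ⟨(c' (Sum.inl p)).val / ρ, ?_⟩, ?_⟩
  · have hx := (c' (Sum.inl p)).2
    rw [Nat.div_lt_iff_lt_mul hρpos, mul_comm L ρ]
    exact hD ▸ hx
  set c : P → Fin L := fun p => ⟨(c' (Sum.inl p)).val / ρ, by
    have hx := (c' (Sum.inl p)).2
    rw [Nat.div_lt_iff_lt_mul hρpos, mul_comm L ρ]
    exact hD ▸ hx⟩ with hc
  have key : ∀ (φ : P → V) (φ' : P ⊕ (Σ u : V, Fin (D - n u)) → V), (∀ p, φ' (Sum.inl p) = φ p) →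
      (∀ (v : V) (k : Fin D),
        (univ.filter fun x => φ' x = v ∧ c' x = k).card ≤ 1) →
      ∀ (v : V) (k : Fin L), (univ.filter fun p : P => φ p = v ∧ c p = k).card ≤ ρ := by
    intro φ φ' hcompat hone v k
    have hcard : (Finset.Ico (k.val * ρ) (k.val * ρ + ρ)).card = ρ := by
      rw [Nat.card_Ico]; omega
    rw [← hcard]
    apply Finset.card_le_card_of_injOn (fun p => (c' (Sum.inl p)).val)
    · intro p hp
      simp only [mem_coe, mem_filter, mem_univ, true_and] at hp
      have hk : (c' (Sum.inl p)).val / ρ = k.val := congrArg Fin.val hp.2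
      have hdm := Nat.div_add_mod (c' (Sum.inl p)).val ρ
      have hmod := Nat.mod_lt (c' (Sum.inl p)).val hρpos
      rw [hk] at hdm
      have hcm : k.val * ρ = ρ * k.val := mul_comm _ _
      simp only [Finset.mem_coe, Finset.mem_Ico]
      omega
    · intro p hp q hq hpq
      simp only [mem_coe, mem_filter, mem_univ, true_and] at hp hq
      have hcc : c' (Sum.inl p) = c' (Sum.inl q) := Fin.val_injective hpq
      set j := c' (Sum.inl p) with hj
      have h1 := hone v j
      have := Finset.card_le_one.mp h1 (Sum.inl p)
        (by simp [hcompat, hp.1, hj]) (Sum.inl q)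
        (by simp [hcompat, hq.1, ← hcc])
      exact Sum.inl.inj this
  intro v k
  exact ⟨key f f' (fun p => rfl) (fun v k => (hc' v k).1) v k,
    key g g' (fun p => rfl) (fun v k => (hc' v k).2) v k⟩
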